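/- Let g be a Lorentzian 3×3 real symmetric matrix, g8 a positive-definite 8×8 real symmetric matrix, c, A ∈ ℝ, and set f := (1 + A·c)² − A²·|g|. If f > 0, then U_Ω(A)ᵀ · M_C(g, g8, c) · U_Ω(A) = M_C( f^(−2/3)·g, f^(1/3)·g8, (c·(1 + A·c) − A·|g|)/f ). This is the action of the timelike Ω-shift duality on the metric and 3-form when the dual background can still be described by a metric and 3-form. -/

import Mathlib

open Matrix

/-- The (g,C)-frame generalised metric: a 14×14 matrix in 3+3+8 block form. -/
noncomputable def MC (g : Matrix (Fin 3) (Fin 3) ℝ) (g8 : Matrix (Fin 8) (Fin 8) ℝ) (c : ℝ) :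
    Matrix ((Fin 3 ⊕ Fin 3) ⊕ Fin 8) ((Fin 3 ⊕ Fin 3) ⊕ Fin 8) ℝ :=
  |g.det * g8.det| ^ (-(1 : ℝ) / 2) •
    fromBlocks
      (fromBlocks ((1 + c ^ 2 / g.det) • g) ((c / g.det) • g) ((c / g.det) • g)
        ((1 / g.det) • g))
      0 0 g8

/-- The Ω-shift duality matrix: [[1, A·1], [0, 1]] on the first 6 coordinates,
identity on the 8 transverse coordinates. -/
def UOmega (A : ℝ) : Matrix ((Fin 3 ⊕ Fin 3) ⊕ Fin 8) ((Fin 3 ⊕ Fin 3) ⊕ Fin 8) ℝ :=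
  fromBlocks (fromBlocks 1 (A • 1) 0 1) 0 0 1

/-- A 3×3 real symmetric (Hermitian) matrix is Lorentzian if it has exactly one negative
and two positive eigenvalues. -/
def Lorentzian3 (g : Matrix (Fin 3) (Fin 3) ℝ) : Prop :=
  ∃ hg : g.IsHermitian,
    {i | hg.eigenvalues i < 0}.ncard = 1 ∧ {i | 0 < hg.eigenvalues i}.ncard = 2

lemma Lorentzian3.det_neg {g : Matrix (Fin 3) (Fin 3) ℝ} (h : Lorentzian3 g) : g.det < 0 := by
  obtain ⟨hg, h1, h2⟩ := h
  obtain ⟨a, ha⟩ := Set.ncard_eq_one.mp h1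
  obtain ⟨b, d, hbd, hbd2⟩ := Set.ncard_eq_two.mp h2
  have hla : hg.eigenvalues a < 0 := by
    have : a ∈ {i | hg.eigenvalues i < 0} := ha ▸ rfl; exact this
  have hlb : 0 < hg.eigenvalues b := by
    have : b ∈ {i | 0 < hg.eigenvalues i} := hbd2 ▸ (by simp : b ∈ ({b,d}:Set (Fin 3)))
    exact this
  have hld : 0 < hg.eigenvalues d := by
    have : d ∈ {i | 0 < hg.eigenvalues i} := hbd2 ▸ (by simp : d ∈ ({b,d}:Set (Fin 3)))
    exact this
  have hab : a ≠ b := fun h => by rw [h] at hla; linarith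
  have had : a ≠ d := fun h => by rw [h] at hla; linarith
  have huniv : ({a, b, d} : Finset (Fin 3)) = Finset.univ := by
    apply Finset.eq_univ_of_card
    rw [Finset.card_insert_of_notMem (by simp [hab, had]),
      Finset.card_insert_of_notMem (by simp [hbd]), Finset.card_singleton]
    rfl
  have hdet : g.det = ∏ i, hg.eigenvalues i := by
    simpa using hg.det_eq_prod_eigenvalues
  rw [hdet, ← huniv, Finset.prod_insert (by simp [hab, had]),
    Finset.prod_insert (by simp [hbd]), Finset.prod_singleton]
  nlinarith [mul_pos hlb hld]

lemma smul_congr {x y : ℝ} {n : Type*} (m : Matrix n n ℝ) (h : x = y) : x • m = y • m := h ▸ rfl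

lemma det3 (r : ℝ) (g : Matrix (Fin 3) (Fin 3) ℝ): (r • g).det = r^3 * g.det := by
  simp [det_smul]
lemma det8 (r : ℝ) (g8 : Matrix (Fin 8) (Fin 8) ℝ): (r • g8).det = r^8 * g8.det := by
  simp [det_smul]

set_option maxHeartbeats 1000000 in
/-- Timelike Ω-shift when the dual background is still describable by a metric and 3-form:
for Lorentzian g, positive-definite g8 and f := (1+A·c)² − A²·|g| > 0 (|g| = −det g),
U_Ω(A)ᵀ·M_C(g,g8,c)·U_Ω(A) = M_C(f^(−2/3)·g, f^(1/3)·g8, (c·(1+A·c) − A·|g|)/f). -/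
theorem stmt_11 (g : Matrix (Fin 3) (Fin 3) ℝ) (g8 : Matrix (Fin 8) (Fin 8) ℝ)
    (hg : Lorentzian3 g) (hg8 : g8.PosDef) (c A : ℝ)
    (hf : 0 < (1 + A * c) ^ 2 - A ^ 2 * (-g.det)) :
    (UOmega A)ᵀ * MC g g8 c * UOmega A =
      MC (((1 + A * c) ^ 2 - A ^ 2 * (-g.det)) ^ (-(2 : ℝ) / 3) • g)
        (((1 + A * c) ^ 2 - A ^ 2 * (-g.det)) ^ ((1 : ℝ) / 3) • g8)
        ((c * (1 + A * c) - A * (-g.det)) / ((1 + A * c) ^ 2 - A ^ 2 * (-g.det))) := by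
  have hD : g.det < 0 := hg.det_neg
  obtain ⟨f, hfd⟩ : ∃ x, x = (1 + A * c) ^ 2 - A ^ 2 * (-g.det) := ⟨_, rfl⟩
  rw [← hfd] at hf ⊢
  obtain ⟨p, hpd⟩ : ∃ x, x = f ^ (-(1:ℝ)/3) := ⟨_, rfl⟩
  have hp0 : 0 < p := hpd ▸ Real.rpow_pos_of_pos hf _
  have hp3 : p ^ 3 = f⁻¹ := by
    rw [hpd, ← Real.rpow_natCast (f ^ _) 3, ← Real.rpow_mul hf.le]
    norm_num [Real.rpow_neg_one]
  have h13 : f ^ ((1:ℝ)/3) = p⁻¹ := by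
    rw [hpd, ← Real.rpow_neg_one (f ^ (-(1:ℝ)/3)), ← Real.rpow_mul hf.le]
    norm_num
  have h23 : f ^ (-(2:ℝ)/3) = f⁻¹ * p⁻¹ := by
    rw [show (-(2:ℝ)/3) = -1 + 1/3 by norm_num, Real.rpow_add hf, Real.rpow_neg_one, h13]
  have harg : (f⁻¹*p⁻¹)^3 * g.det * ((p⁻¹)^8 * g8.det) = (p⁻¹)^2 * (g.det * g8.det) := by
    rw [← hp3]; field_simp
  have hpre : |(f⁻¹*p⁻¹)^3 * g.det * ((p⁻¹)^8 * g8.det)| ^ (-(1:ℝ)/2)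
      = p * |g.det * g8.det| ^ (-(1:ℝ)/2) := by
    rw [harg, abs_mul, abs_of_pos (by positivity : (0:ℝ) < (p⁻¹)^2),
      Real.mul_rpow (by positivity) (abs_nonneg _), ← Real.rpow_natCast p⁻¹ 2,
      ← Real.rpow_mul (by positivity)]
    norm_num [Real.rpow_neg_one]
  simp only [MC, UOmega, fromBlocks_transpose, transpose_one, transpose_zero, transpose_smul,
    Matrix.mul_smul, Matrix.smul_mul, fromBlocks_multiply,
    Matrix.one_mul, Matrix.mul_one, Matrix.zero_mul, Matrix.mul_zero, add_zero, zero_add,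
    smul_smul, smul_add, smul_zero, det3, det8, h13, h23, hpre,
    fromBlocks_smul, ← add_smul]
  have hDne : g.det ≠ 0 := hD.ne
  have hfne : f ≠ 0 := hf.ne'
  have hpne : p ≠ 0 := hp0.ne'
  have hkey : f⁻¹ * p⁻¹ = p ^ 2 := by rw [← hp3]; field_simp
  have hsix : (p ^ 2) ^ 3 = f⁻¹ ^ 2 := by rw [← hp3]; ring
  have hcollapse : ∀ s X : ℝ, p * s * (X * p ^ 2) = s * X * f⁻¹ := by
    intro s X; rw [← hp3]; ring
  rw [fromBlocks_inj]
  refine ⟨?_, rfl, rfl, ?_⟩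
  · rw [fromBlocks_inj]
    refine ⟨?_, ?_, ?_, ?_⟩ <;>
    · apply smul_congr
      rw [hkey, hsix, hcollapse]
      field_simp [hDne, hfne]
      subst hfd; ring
  · apply smul_congr
    rw [mul_comm p, mul_assoc, mul_inv_cancel₀ hpne, mul_one]
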